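/- Above Threshold (Sparse Vector Technique with N = 1) is ε-differentially private: let n ≥ 1, ε > 0, T : ℝ. Let Lap(2/ε) be the Borel measure on ℝ with density x ↦ (ε/4)·exp(−(ε/2)·|x|) and Lap(4/ε) the Borel measure on ℝ with density x ↦ (ε/8)·exp(−(ε/4)·|x|), both with respect to Lebesgue measure, and let μ be the product measure of Lap(2/ε) with n independent copies of Lap(4/ε) on ℝ × (Fin n → ℝ). For q : Fin n → ℝ and j : Fin n define AT(q, j) := {(z, η) | q j + η j ≥ T + z ∧ ∀ i, i < j → q i + η i < T + z}, the event that j is the first index whose noisy answer reaches the noisy threshold. Then for all q₁, q₂ : Fin n → ℝ with |q₁ i − q₂ i| ≤ 1 for every i, and every j : Fin n, μ(AT(q₁, j)) ≤ exp(ε) · μ(AT(q₂, j)). -/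
import Mathlib
open MeasureTheory

theorem lintegral_pi_prod (n : ℕ) {α : Type} [MeasurableSpace α]
    (μ : Fin n → Measure α) [∀ i, SigmaFinite (μ i)]
    (f : Fin n → α → ENNReal) (hf : ∀ i, Measurable (f i)) :
    ∫⁻ x, ∏ i, f i (x i) ∂Measure.pi μ = ∏ i, ∫⁻ y, f i y ∂μ i := by
  induction n with
  | zero => simp
  | succ n ih =>
    have h := (measurePreserving_piFinSuccAbove (fun i : Fin (n+1) => μ i) 0).symm
    have hmeas : Measurable fun x : Fin (n+1) → α => ∏ i, f i (x i) :=
      Finset.measurable_prod _ fun i _ => (hf i).comp (measurable_pi_apply i)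
    rw [← h.lintegral_comp hmeas]
    simp_rw [MeasurableEquiv.piFinSuccAbove_symm_apply, Fin.insertNthEquiv, Equiv.coe_fn_mk,
      Fin.insertNth_zero, Fin.prod_univ_succ, Fin.zero_succAbove, cast_eq, Fin.cons_zero,
      Fin.cons_succ]
    rw [lintegral_prod_mul (f := f 0) (g := fun b : Fin n → α => ∏ i, f i.succ (b i))
      (hf 0).aemeasurable
      (Finset.measurable_prod _ fun i _ => (hf _).comp (measurable_pi_apply i)).aemeasurable]
    rw [ih (fun i => μ i.succ) (fun i => f i.succ) (fun i => hf _)]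

theorem my_pi_withDensity (n : ℕ) (g : Fin n → ℝ → ENNReal) (hg : ∀ i, Measurable (g i))
    (hg' : ∀ i x, g i x ≠ ⊤) :
    Measure.pi (fun i => (volume : Measure ℝ).withDensity (g i)) =
      (Measure.pi fun _ : Fin n => (volume : Measure ℝ)).withDensity
        (fun x => ∏ i, g i (x i)) := by
  haveI : ∀ i, SigmaFinite ((volume : Measure ℝ).withDensity (g i)) := fun i =>
    SigmaFinite.withDensity_of_ne_top' (hg' i)
  refine Measure.pi_eq fun s hs => ?_
  rw [withDensity_apply _ (MeasurableSet.univ_pi hs), ← lintegral_indicator (MeasurableSet.univ_pi hs)]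
  have hind : ∀ x : Fin n → ℝ,
      (Set.univ.pi s).indicator (fun x => ∏ i, g i (x i)) x
        = ∏ i, (s i).indicator (g i) (x i) := by
    intro x
    by_cases hx : x ∈ Set.univ.pi s
    · rw [Set.indicator_of_mem hx]
      exact Finset.prod_congr rfl fun i _ =>
        (Set.indicator_of_mem (hx i trivial) _).symm
    · rw [Set.indicator_of_notMem hx]
      rw [Set.mem_univ_pi] at hx
      push_neg at hx
      obtain ⟨i, hi⟩ := hx
      exact (Finset.prod_eq_zero (Finset.mem_univ i) (Set.indicator_of_notMem hi _)).symm
  simp_rw [hind]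
  rw [lintegral_pi_prod n _ _ (fun i => (hg i).indicator (hs i))]
  exact Finset.prod_congr rfl fun i _ => by
    rw [lintegral_indicator (hs i), ← withDensity_apply _ (hs i)]

theorem my_prod_withDensity {α β : Type} [MeasurableSpace α] [MeasurableSpace β]
    (μ : Measure α) (ν : Measure β) [SigmaFinite μ] [SigmaFinite ν]
    {f : α → ENNReal} {g : β → ENNReal} (hf : Measurable f) (hg : Measurable g)
    (hf' : ∀ x, f x ≠ ⊤) (hg' : ∀ x, g x ≠ ⊤) :
    (μ.withDensity f).prod (ν.withDensity g) =
      (μ.prod ν).withDensity (fun p => f p.1 * g p.2) := by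
  haveI : SigmaFinite (μ.withDensity f) := SigmaFinite.withDensity_of_ne_top' hf'
  haveI : SigmaFinite (ν.withDensity g) := SigmaFinite.withDensity_of_ne_top' hg'
  refine Measure.prod_eq fun s t hs ht => ?_
  rw [withDensity_apply _ (hs.prod ht), ← lintegral_indicator (hs.prod ht)]
  have hind : ∀ p : α × β,
      (s ×ˢ t).indicator (fun p => f p.1 * g p.2) p
        = s.indicator f p.1 * t.indicator g p.2 := by
    intro p
    by_cases hp : p ∈ s ×ˢ t
    · rw [Set.indicator_of_mem hp, Set.indicator_of_mem hp.1, Set.indicator_of_mem hp.2]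
    · rw [Set.indicator_of_notMem hp]
      rw [Set.mem_prod] at hp
      push_neg at hp
      by_cases h1 : p.1 ∈ s
      · rw [Set.indicator_of_notMem (hp h1), mul_zero]
      · rw [Set.indicator_of_notMem h1, zero_mul]
  simp_rw [hind]
  rw [lintegral_prod_mul (hf.indicator hs).aemeasurable (hg.indicator ht).aemeasurable,
    lintegral_indicator hs, lintegral_indicator ht, withDensity_apply _ hs, withDensity_apply _ ht]

theorem lap_key (a c t x : ℝ) (ha : 0 ≤ a) (hc : 0 ≤ c) :
    ENNReal.ofReal (c * Real.exp (-a * |x|)) ≤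
      ENNReal.ofReal (Real.exp (a * |t|)) * ENNReal.ofReal (c * Real.exp (-a * |x + t|)) := by
  rw [← ENNReal.ofReal_mul (Real.exp_nonneg _)]
  apply ENNReal.ofReal_le_ofReal
  have habs : a * |x + t| ≤ a * (|x| + |t|) :=
    mul_le_mul_of_nonneg_left (abs_add_le x t) ha
  have hexp : Real.exp (-a * |x|) ≤ Real.exp (a * |t|) * Real.exp (-a * |x + t|) := by
    rw [← Real.exp_add]
    apply Real.exp_le_exp.mpr
    nlinarith
  calc c * Real.exp (-a * |x|) ≤ c * (Real.exp (a * |t|) * Real.exp (-a * |x + t|)) :=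
        mul_le_mul_of_nonneg_left hexp hc
    _ = Real.exp (a * |t|) * (c * Real.exp (-a * |x + t|)) := by ring

theorem above_threshold_dp (n : ℕ) (hn : 1 ≤ n) (ε : ℝ) (hε : 0 < ε) (T : ℝ)
    (μ : Measure (ℝ × (Fin n → ℝ)))
    (hμ : μ = (volume.withDensity
        (fun x => ENNReal.ofReal ((ε / 4) * Real.exp (-(ε / 2) * |x|)))).prod
      (Measure.pi (fun _ : Fin n => volume.withDensity
        (fun x => ENNReal.ofReal ((ε / 8) * Real.exp (-(ε / 4) * |x|))))))
    (AT : (Fin n → ℝ) → Fin n → Set (ℝ × (Fin n → ℝ)))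
    (hAT : ∀ q j, AT q j = {p : ℝ × (Fin n → ℝ) |
      q j + p.2 j ≥ T + p.1 ∧ ∀ i, i < j → q i + p.2 i < T + p.1})
    (q₁ q₂ : Fin n → ℝ) (hadj : ∀ i, |q₁ i - q₂ i| ≤ 1) (j : Fin n) :
    μ (AT q₁ j) ≤ ENNReal.ofReal (Real.exp ε) * μ (AT q₂ j) := by
  classical
  set g₁ : ℝ → ENNReal := fun x => ENNReal.ofReal ((ε / 4) * Real.exp (-(ε / 2) * |x|)) with hg₁def
  set g₂ : ℝ → ENNReal := fun x => ENNReal.ofReal ((ε / 8) * Real.exp (-(ε / 4) * |x|)) with hg₂def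
  have hg₁m : Measurable g₁ := by
    apply ENNReal.measurable_ofReal.comp
    fun_prop
  have hg₂m : Measurable g₂ := by
    apply ENNReal.measurable_ofReal.comp
    fun_prop
  set F : ℝ × (Fin n → ℝ) → ENNReal := fun p => g₁ p.1 * ∏ i, g₂ (p.2 i) with hFdef
  have hFm : Measurable F :=
    (hg₁m.comp measurable_fst).mul
      (Finset.measurable_prod _ fun i _ =>
        hg₂m.comp ((measurable_pi_apply i).comp measurable_snd))
  -- single-density representation
  have hμ' : μ = (volume : Measure (ℝ × (Fin n → ℝ))).withDensity F := by
    rw [hμ, my_pi_withDensity n (fun _ => g₂) (fun _ => hg₂m) (fun _ x => ENNReal.ofReal_ne_top),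
      my_prod_withDensity (f := g₁) (g := fun x : Fin n → ℝ => ∏ i, g₂ (x i))
        volume (Measure.pi fun _ : Fin n => (volume : Measure ℝ))
        hg₁m (Finset.measurable_prod _ fun i _ => hg₂m.comp (measurable_pi_apply i))
        (fun x => ENNReal.ofReal_ne_top)
        (fun x => ENNReal.prod_ne_top fun i _ => ENNReal.ofReal_ne_top)]
    rw [← volume_pi, ← Measure.volume_eq_prod]
  -- translation vector
  set c : Fin n → ℝ := fun i => if i = j then 2 else 0 with hcdef
  set v : ℝ × (Fin n → ℝ) := (1, c) with hvdef
  -- measurability of the events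
  have hmeas : ∀ q : Fin n → ℝ, MeasurableSet (AT q j) := by
    intro q
    rw [hAT]
    have h1 : MeasurableSet {p : ℝ × (Fin n → ℝ) | q j + p.2 j ≥ T + p.1} :=
      measurableSet_le (by fun_prop) (by fun_prop)
    have h2 : ∀ i : Fin n, MeasurableSet {p : ℝ × (Fin n → ℝ) | q i + p.2 i < T + p.1} :=
      fun i => measurableSet_lt (by fun_prop) (by fun_prop)
    have hset : {p : ℝ × (Fin n → ℝ) |
        q j + p.2 j ≥ T + p.1 ∧ ∀ i, i < j → q i + p.2 i < T + p.1}
        = {p : ℝ × (Fin n → ℝ) | q j + p.2 j ≥ T + p.1} ∩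
          ⋂ i, ⋂ (_ : i < j), {p : ℝ × (Fin n → ℝ) | q i + p.2 i < T + p.1} := by
      ext p
      simp [Set.mem_iInter]
    rw [hset]
    exact h1.inter (MeasurableSet.iInter fun i => MeasurableSet.iInter fun _ => h2 i)
  -- inclusion
  have hsub : AT q₁ j ⊆ (fun p : ℝ × (Fin n → ℝ) => p + v) ⁻¹' (AT q₂ j) := by
    intro p hp
    rw [hAT] at hp ⊢
    simp only [Set.mem_preimage, Set.mem_setOf_eq, Prod.fst_add, Prod.snd_add,
      Pi.add_apply, hvdef] at hp ⊢
    obtain ⟨hp1, hp2⟩ := hp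
    constructor
    · have h1 := abs_le.mp (hadj j)
      have : c j = 2 := if_pos rfl
      rw [this]
      linarith [hp1]
    · intro i hij
      have h1 := abs_le.mp (hadj i)
      have : c i = 0 := if_neg (ne_of_lt hij)
      rw [this]
      have := hp2 i hij
      linarith
  -- pointwise density bound
  have hF : ∀ p : ℝ × (Fin n → ℝ), F p ≤ ENNReal.ofReal (Real.exp ε) * F (p + v) := by
    intro p
    have ha2 : (0:ℝ) ≤ ε / 2 := by linarith
    have ha4 : (0:ℝ) ≤ ε / 4 := by linarith
    have hc4 : (0:ℝ) ≤ ε / 4 := ha4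
    have hc8 : (0:ℝ) ≤ ε / 8 := by linarith
    have h1 : g₁ p.1 ≤ ENNReal.ofReal (Real.exp (ε / 2 * |1|)) * g₁ (p.1 + 1) :=
      lap_key (ε / 2) (ε / 4) 1 p.1 ha2 hc4
    have h2 : (∏ i, g₂ (p.2 i)) ≤
        ENNReal.ofReal (Real.exp (ε / 4 * |2|)) * ∏ i, g₂ (p.2 i + c i) := by
      have e1 : (∏ i, g₂ (p.2 i)) =
          g₂ (p.2 j) * ∏ i ∈ Finset.univ.erase j, g₂ (p.2 i) :=
        (Finset.mul_prod_erase _ _ (Finset.mem_univ j)).symm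
      have e2 : (∏ i, g₂ (p.2 i + c i)) =
          g₂ (p.2 j + 2) * ∏ i ∈ Finset.univ.erase j, g₂ (p.2 i) := by
        rw [← Finset.mul_prod_erase _ (fun i => g₂ (p.2 i + c i)) (Finset.mem_univ j)]
        have hcj : c j = 2 := if_pos rfl
        rw [hcj]
        congr 1
        refine Finset.prod_congr rfl fun i hi => ?_
        have : c i = 0 := if_neg (Finset.ne_of_mem_erase hi)
        rw [this, add_zero]
      rw [e1, e2]
      calc g₂ (p.2 j) * ∏ i ∈ Finset.univ.erase j, g₂ (p.2 i)
          ≤ (ENNReal.ofReal (Real.exp (ε / 4 * |2|)) * g₂ (p.2 j + 2)) *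
            ∏ i ∈ Finset.univ.erase j, g₂ (p.2 i) :=
            mul_le_mul_left (lap_key (ε / 4) (ε / 8) 2 (p.2 j) ha4 hc8) _
        _ = ENNReal.ofReal (Real.exp (ε / 4 * |2|)) *
            (g₂ (p.2 j + 2) * ∏ i ∈ Finset.univ.erase j, g₂ (p.2 i)) := mul_assoc _ _ _
    have hFv : F (p + v) = g₁ (p.1 + 1) * ∏ i, g₂ (p.2 i + c i) := by
      simp only [hFdef, hvdef, Prod.fst_add, Prod.snd_add, Pi.add_apply]
    have hk : ENNReal.ofReal (Real.exp (ε / 2 * |1|)) * ENNReal.ofReal (Real.exp (ε / 4 * |2|))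
        = ENNReal.ofReal (Real.exp ε) := by
      rw [← ENNReal.ofReal_mul (Real.exp_nonneg _), ← Real.exp_add]
      congr 1
      rw [abs_one, abs_two]
      ring
    calc F p = g₁ p.1 * ∏ i, g₂ (p.2 i) := rfl
      _ ≤ (ENNReal.ofReal (Real.exp (ε / 2 * |1|)) * g₁ (p.1 + 1)) *
          (ENNReal.ofReal (Real.exp (ε / 4 * |2|)) * ∏ i, g₂ (p.2 i + c i)) :=
          mul_le_mul' h1 h2
      _ = (ENNReal.ofReal (Real.exp (ε / 2 * |1|)) * ENNReal.ofReal (Real.exp (ε / 4 * |2|))) *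
          (g₁ (p.1 + 1) * ∏ i, g₂ (p.2 i + c i)) := by ring
      _ = ENNReal.ofReal (Real.exp ε) * F (p + v) := by rw [hk, hFv]
  -- translation is measure preserving
  have htrans : MeasurePreserving (fun p : ℝ × (Fin n → ℝ) => p + v) volume volume := by
    rw [Measure.volume_eq_prod]
    exact (measurePreserving_add_right volume (1:ℝ)).prod
      (measurePreserving_add_right (volume : Measure (Fin n → ℝ)) c)
  have hA1 := hmeas q₁
  have hA2 := hmeas q₂
  calc μ (AT q₁ j) = ∫⁻ p in AT q₁ j, F p ∂volume := by rw [hμ', withDensity_apply _ hA1]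
    _ ≤ ∫⁻ p in AT q₁ j, ENNReal.ofReal (Real.exp ε) * F (p + v) ∂volume :=
        setLIntegral_mono (measurable_const.mul (hFm.comp (measurable_add_const v)))
          (fun p _ => hF p)
    _ ≤ ∫⁻ p in (fun p : ℝ × (Fin n → ℝ) => p + v) ⁻¹' (AT q₂ j),
          ENNReal.ofReal (Real.exp ε) * F (p + v) ∂volume := lintegral_mono_set hsub
    _ = ENNReal.ofReal (Real.exp ε) * ∫⁻ p in (fun p : ℝ × (Fin n → ℝ) => p + v) ⁻¹' (AT q₂ j),
          F (p + v) ∂volume := lintegral_const_mul _ (hFm.comp (measurable_add_const v))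
    _ = ENNReal.ofReal (Real.exp ε) * ∫⁻ p in AT q₂ j, F p ∂volume := by
        rw [htrans.setLIntegral_comp_preimage hA2 hFm]
    _ = ENNReal.ofReal (Real.exp ε) * μ (AT q₂ j) := by rw [hμ', withDensity_apply _ hA2]
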